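/- For every real x > 0: 1/ln(1+x) ≥ 1/x + 1/2 − x/12. -/

import Mathlib

lemma log_le_pade (x : ℝ) (hx : 0 ≤ x) :
    Real.log (1 + x) ≤ x * (6 + x) / (6 + 4 * x) := by
  set f : ℝ → ℝ := fun y => y * (6 + y) / (6 + 4 * y) - Real.log (1 + y) with hf
  have key : ∀ y : ℝ, 0 ≤ y →
      HasDerivAt f (((6 + 2*y) * (6 + 4*y) - (y * (6 + y)) * 4) / (6 + 4*y)^2
        - 1 / (1 + y)) y := by
    intro y hy
    have hv : (6 + 4*y) ≠ 0 := by nlinarith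
    have h1y : (1 + y) ≠ 0 := by nlinarith
    have hnum : HasDerivAt (fun y : ℝ => y * (6 + y)) (6 + 2*y) y := by
      have := (hasDerivAt_id y).mul ((hasDerivAt_const y (6:ℝ)).add (hasDerivAt_id y))
      refine this.congr_deriv ?_; simp [id]; ring
    have hden : HasDerivAt (fun y : ℝ => 6 + 4*y) 4 y := by
      have := (hasDerivAt_const y (6:ℝ)).add ((hasDerivAt_id y).const_mul 4)
      refine this.congr_deriv ?_; ring
    have hdiv := hnum.div hden hv
    have hlog : HasDerivAt (fun y : ℝ => Real.log (1 + y)) (1 / (1 + y)) y := by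
      have := (Real.hasDerivAt_log h1y).comp y
        ((hasDerivAt_const y (1:ℝ)).add (hasDerivAt_id y))
      refine this.congr_deriv ?_; ring
    exact hdiv.sub hlog
  have hmono : MonotoneOn f (Set.Ici (0:ℝ)) := by
    apply monotoneOn_of_deriv_nonneg (convex_Ici 0)
    · apply ContinuousOn.sub
      · apply ContinuousOn.div
        · fun_prop
        · fun_prop
        · intro y hy; simp at hy; nlinarith
      · apply ContinuousOn.log
        · fun_prop
        · intro y hy; simp at hy; nlinarith
    · intro y hy
      rw [interior_Ici] at hy
      exact ((key y hy.le).differentiableAt).differentiableWithinAt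
    · intro y hy
      rw [interior_Ici] at hy
      have hy' : 0 < y := hy
      rw [(key y hy'.le).deriv]
      have hv : (0:ℝ) < 6 + 4*y := by linarith
      have h1y : (0:ℝ) < 1 + y := by linarith
      rw [sub_nonneg, div_le_div_iff₀ h1y (by positivity)]
      nlinarith [pow_pos hv 2, sq_nonneg y, mul_pos hy' (mul_pos hy' hy')]
  have h0 : f 0 = 0 := by simp [hf]
  have := hmono (Set.self_mem_Ici) (Set.mem_Ici.mpr hx) hx
  rw [h0] at this
  have := this
  simp only [hf] at this
  linarith

/-- For every `x > 0`: `1/ln(1+x) ≥ 1/x + 1/2 - x/12`. -/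
theorem one_div_log_one_add_ge (x : ℝ) (hx : 0 < x) :
    1 / Real.log (1 + x) ≥ 1 / x + 1 / 2 - x / 12 := by
  have hlogpos : 0 < Real.log (1 + x) := Real.log_pos (by linarith)
  have hle : Real.log (1 + x) ≤ x * (6 + x) / (6 + 4 * x) := log_le_pade x hx.le
  have hP : 0 < x * (6 + x) := by nlinarith
  have h1 : (6 + 4*x) / (x * (6 + x)) ≤ 1 / Real.log (1 + x) := by
    rw [div_le_div_iff₀ hP hlogpos]
    calc (6 + 4*x) * Real.log (1 + x) ≤ (6 + 4*x) * (x * (6 + x) / (6 + 4 * x)) := by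
          apply mul_le_mul_of_nonneg_left hle (by linarith)
      _ = 1 * (x * (6 + x)) := by field_simp
  have h2 : 1 / x + 1 / 2 - x / 12 ≤ (6 + 4*x) / (x * (6 + x)) := by
    rw [le_div_iff₀ hP]
    have hx' : x ≠ 0 := hx.ne'
    have heq : (1/x + 1/2 - x/12) * (x*(6+x)) = 6 + 4*x - x^3/12 := by
      field_simp; ring
    rw [heq]
    nlinarith [pow_pos hx 3]
  linarith
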